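/- Let d > 0 be a real number and let f : ℝ → ℝ be continuous and integrable. Then the function u := p_d ∗ f is twice continuously differentiable on ℝ and satisfies u(x) − d·u''(x) = f(x) for every x ∈ ℝ. -/

import Mathlib

/-- The kernel `p_d(x) = (1/(2√d)) exp(-|x|/√d)`. -/
noncomputable def pd (d : ℝ) (x : ℝ) : ℝ :=
  1 / (2 * Real.sqrt d) * Real.exp (-|x| / Real.sqrt d)


section helpers
open MeasureTheory Set Real

noncomputable def ga (s : ℝ) (f : ℝ → ℝ) (ξ : ℝ) : ℝ := Real.exp (ξ / s) * f ξ
noncomputable def gb (s : ℝ) (f : ℝ → ℝ) (ξ : ℝ) : ℝ := Real.exp (-ξ / s) * f ξ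
noncomputable def Af (s : ℝ) (f : ℝ → ℝ) (x : ℝ) : ℝ := ∫ ξ in Iic x, ga s f ξ
noncomputable def Bf (s : ℝ) (f : ℝ → ℝ) (x : ℝ) : ℝ := ∫ ξ in Ioi x, gb s f ξ

section aux

variable {f : ℝ → ℝ} (s : ℝ)

lemma continuous_ga (hf : Continuous f) : Continuous (ga s f) := by
  unfold ga; fun_prop

lemma continuous_gb (hf : Continuous f) : Continuous (gb s f) := by
  unfold gb; fun_prop

lemma integrableOn_ga (hs : 0 < s) (hf : Continuous f) (hfi : Integrable f) (x : ℝ) :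
    IntegrableOn (ga s f) (Iic x) := by
  refine Integrable.mono' ((hfi.norm.const_mul (Real.exp (x / s))).restrict)
    (continuous_ga s hf).aestronglyMeasurable.restrict ?_
  filter_upwards [ae_restrict_mem measurableSet_Iic] with ξ hξ
  have h1 : Real.exp (ξ / s) ≤ Real.exp (x / s) :=
    Real.exp_le_exp.2 (by gcongr; exact hξ)
  simp only [ga, norm_mul, Real.norm_eq_abs, Real.abs_exp]
  exact mul_le_mul_of_nonneg_right h1 (abs_nonneg _)

lemma integrableOn_gb (hs : 0 < s) (hf : Continuous f) (hfi : Integrable f) (x : ℝ) :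
    IntegrableOn (gb s f) (Ioi x) := by
  refine Integrable.mono' ((hfi.norm.const_mul (Real.exp (-x / s))).restrict)
    (continuous_gb s hf).aestronglyMeasurable.restrict ?_
  filter_upwards [ae_restrict_mem measurableSet_Ioi] with ξ hξ
  have h1 : Real.exp (-ξ / s) ≤ Real.exp (-x / s) :=
    Real.exp_le_exp.2 (by gcongr; exact hξ.le)
  simp only [gb, norm_mul, Real.norm_eq_abs, Real.abs_exp]
  exact mul_le_mul_of_nonneg_right h1 (abs_nonneg _)

lemma hasDerivAt_Af (hs : 0 < s) (hf : Continuous f) (hfi : Integrable f) (x : ℝ) :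
    HasDerivAt (Af s f) (ga s f x) x := by
  have hga : Continuous (ga s f) := continuous_ga s hf
  have hAeq : Af s f = fun y => Af s f 0 + ∫ t in (0:ℝ)..y, ga s f t := by
    funext y
    have h := intervalIntegral.integral_Iic_sub_Iic (μ := volume)
      (integrableOn_ga s hs hf hfi 0) (integrableOn_ga s hs hf hfi y)
    simp only [Af]; linarith
  rw [hAeq]
  have hint : IntervalIntegrable (ga s f) volume 0 x := by
    rw [intervalIntegrable_iff]
    exact (integrableOn_ga s hs hf hfi (max 0 x)).mono_set (fun t ht => ht.2)
  exact (intervalIntegral.integral_hasDerivAt_right hint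
    hga.stronglyMeasurable.stronglyMeasurableAtFilter hga.continuousAt).const_add _

lemma hasDerivAt_Bf (hs : 0 < s) (hf : Continuous f) (hfi : Integrable f) (x : ℝ) :
    HasDerivAt (Bf s f) (-(gb s f x)) x := by
  have hgb : Continuous (gb s f) := continuous_gb s hf
  have key : ∀ a b : ℝ, a ≤ b → Bf s f a = (∫ t in a..b, gb s f t) + Bf s f b := by
    intro a b hab
    rw [intervalIntegral.integral_of_le hab, Bf, Bf,
      ← setIntegral_union (Ioc_disjoint_Ioi le_rfl) measurableSet_Ioi
        ((integrableOn_gb s hs hf hfi a).mono_set Ioc_subset_Ioi_self)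
        (integrableOn_gb s hs hf hfi b),
      Ioc_union_Ioi_eq_Ioi hab]
  have hBeq : Bf s f = fun y => Bf s f 0 - ∫ t in (0:ℝ)..y, gb s f t := by
    funext y
    rcases le_total 0 y with h | h
    · rw [key 0 y h]; ring
    · rw [key y 0 h, intervalIntegral.integral_symm]; ring
  rw [hBeq]
  have hint : IntervalIntegrable (gb s f) volume 0 x := by
    rw [intervalIntegrable_iff]
    exact (integrableOn_gb s hs hf hfi (min 0 x)).mono_set (fun t ht => ht.1)
  have := ((intervalIntegral.integral_hasDerivAt_right hint
    hgb.stronglyMeasurable.stronglyMeasurableAtFilter hgb.continuousAt).const_sub (Bf s f 0))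
  simpa using this

end aux

section main

variable {d : ℝ} {f : ℝ → ℝ}

lemma integrable_pd_mul (hd : 0 < d) (hf : Continuous f) (hfi : Integrable f) (x : ℝ) :
    Integrable (fun ξ => pd d (x - ξ) * f ξ) := by
  have hs : 0 < Real.sqrt d := Real.sqrt_pos.2 hd
  refine hfi.bdd_mul (c := 1 / (2 * Real.sqrt d)) ?_ (Filter.Eventually.of_forall fun ξ => ?_)
  · have : Continuous (pd d) := by unfold pd; fun_prop
    exact (this.comp (continuous_const.sub continuous_id)).aestronglyMeasurable
  · have h1 : Real.exp (-|x - ξ| / Real.sqrt d) ≤ 1 := by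
      rw [Real.exp_le_one_iff]
      exact div_nonpos_of_nonpos_of_nonneg (neg_nonpos_of_nonneg (abs_nonneg _)) hs.le
    have h0 : (0:ℝ) ≤ 1 / (2 * Real.sqrt d) := by positivity
    calc ‖pd d (x - ξ)‖ = 1 / (2 * Real.sqrt d) * Real.exp (-|x - ξ| / Real.sqrt d) := by
          rw [Real.norm_eq_abs, pd, abs_of_nonneg (by positivity)]
      _ ≤ 1 / (2 * Real.sqrt d) * 1 := mul_le_mul_of_nonneg_left h1 h0
      _ = 1 / (2 * Real.sqrt d) := mul_one _

lemma uf_eq (hd : 0 < d) (hf : Continuous f) (hfi : Integrable f) (x : ℝ) :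
    (∫ ξ : ℝ, pd d (x - ξ) * f ξ) =
      1 / (2 * Real.sqrt d) * (Real.exp (-x / Real.sqrt d) * Af (Real.sqrt d) f x
        + Real.exp (x / Real.sqrt d) * Bf (Real.sqrt d) f x) := by
  set s := Real.sqrt d with hsdef
  have hs : 0 < s := Real.sqrt_pos.2 hd
  have hF := integrable_pd_mul hd hf hfi x
  rw [← intervalIntegral.integral_Iic_add_Ioi (b := x) hF.integrableOn hF.integrableOn]
  have h1 : (∫ ξ in Iic x, pd d (x - ξ) * f ξ)
      = (1 / (2 * s) * Real.exp (-x / s)) * Af s f x := by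
    rw [Af, ← integral_const_mul]
    refine setIntegral_congr_fun measurableSet_Iic (fun ξ hξ => ?_)
    have habs : |x - ξ| = x - ξ := abs_of_nonneg (by simpa using mem_Iic.1 hξ)
    have he : Real.exp (-(x - ξ) / s) = Real.exp (-x / s) * Real.exp (ξ / s) := by
      rw [← Real.exp_add]; congr 1; ring
    simp only [pd, ga, ← hsdef, habs, he]; ring
  have h2 : (∫ ξ in Ioi x, pd d (x - ξ) * f ξ)
      = (1 / (2 * s) * Real.exp (x / s)) * Bf s f x := by
    rw [Bf, ← integral_const_mul]
    refine setIntegral_congr_fun measurableSet_Ioi (fun ξ hξ => ?_)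
    have habs : |x - ξ| = ξ - x := by
      rw [abs_of_nonpos (by simpa using (mem_Ioi.1 hξ).le)]; ring
    have he : Real.exp (-(ξ - x) / s) = Real.exp (x / s) * Real.exp (-ξ / s) := by
      rw [← Real.exp_add]; congr 1; ring
    simp only [pd, gb, ← hsdef, habs, he]; ring
  rw [h1, h2]; ring

end main


end helpers

/-- **`p_d` is the Green function of `1 - d∂ₓ²` on the line.** If `f` is continuous and
integrable, then `u := p_d ∗ f` is twice continuously differentiable and
`u - d u'' = f`. -/
theorem green_function_pd (d : ℝ) (hd : 0 < d) (f : ℝ → ℝ)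
    (hf : Continuous f) (hfi : MeasureTheory.Integrable f) :
    ContDiff ℝ 2 (fun x => ∫ ξ : ℝ, pd d (x - ξ) * f ξ) ∧
    ∀ x : ℝ, (∫ ξ : ℝ, pd d (x - ξ) * f ξ)
      - d * deriv (deriv (fun y => ∫ ξ : ℝ, pd d (y - ξ) * f ξ)) x = f x := by
  set s := Real.sqrt d with hsdef
  have hs : 0 < s := Real.sqrt_pos.2 hd
  have hs2 : s ^ 2 = d := Real.sq_sqrt hd.le
  set u : ℝ → ℝ := fun x => ∫ ξ : ℝ, pd d (x - ξ) * f ξ with hu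
  set v : ℝ → ℝ := fun x => 1 / (2 * s ^ 2) *
    (-(Real.exp (-x / s) * Af s f x) + Real.exp (x / s) * Bf s f x) with hv
  have hueq : u = fun x => 1 / (2 * s) *
      (Real.exp (-x / s) * Af s f x + Real.exp (x / s) * Bf s f x) :=
    funext (uf_eq hd hf hfi)
  have hcancel : ∀ x : ℝ, Real.exp (-x / s) * Real.exp (x / s) = 1 := by
    intro x; rw [← Real.exp_add]
    rw [show -x / s + x / s = 0 by ring, Real.exp_zero]
  have hE1 : ∀ x : ℝ, HasDerivAt (fun y => Real.exp (-y / s)) (Real.exp (-x / s) * (-1 / s)) x :=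
    fun x => ((hasDerivAt_id x).neg.div_const s).exp
  have hE2 : ∀ x : ℝ, HasDerivAt (fun y => Real.exp (y / s)) (Real.exp (x / s) * (1 / s)) x := by
    intro x
    have := ((hasDerivAt_id x).div_const s).exp
    simpa using this
  have hu' : ∀ x, HasDerivAt u (v x) x := by
    intro x
    rw [hueq]
    have H := (((hE1 x).mul (hasDerivAt_Af s hs hf hfi x)).add
      ((hE2 x).mul (hasDerivAt_Bf s hs hf hfi x))).const_mul (1 / (2 * s))
    refine H.congr_deriv ?_
    symm
    simp only [hv, ga, gb]
    ring
  have hv' : ∀ x, HasDerivAt v (1 / s ^ 2 * (u x - f x)) x := by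
    intro x
    have H := ((((hE1 x).mul (hasDerivAt_Af s hs hf hfi x)).neg.add
      ((hE2 x).mul (hasDerivAt_Bf s hs hf hfi x))).const_mul (1 / (2 * s ^ 2)))
    have hux : u x = 1 / (2 * s) *
        (Real.exp (-x / s) * Af s f x + Real.exp (x / s) * Bf s f x) := by
      rw [hueq]
    have hc := hcancel x
    refine H.congr_deriv ?_
    symm
    simp only [ga, gb]
    rw [hux]
    linear_combination (f x / s ^ 2) * hc
  have hdiffu : Differentiable ℝ u := fun x => (hu' x).differentiableAt
  have hderivu : deriv u = v := funext fun x => (hu' x).deriv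
  have hdiffv : Differentiable ℝ v := fun x => (hv' x).differentiableAt
  have hderivv : deriv v = fun x => 1 / s ^ 2 * (u x - f x) :=
    funext fun x => (hv' x).deriv
  have hcontu : Continuous u := hdiffu.continuous
  constructor
  · rw [show ((2 : WithTop ℕ∞)) = 1 + 1 from rfl, contDiff_succ_iff_deriv]
    refine ⟨hdiffu, by simp, ?_⟩
    rw [hderivu, contDiff_one_iff_deriv]
    exact ⟨hdiffv, by rw [hderivv]; exact continuous_const.mul (hcontu.sub hf)⟩
  · intro x
    have : deriv (deriv u) x = 1 / s ^ 2 * (u x - f x) := by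
      rw [hderivu, hderivv]
    have hux : u x = ∫ ξ : ℝ, pd d (x - ξ) * f ξ := rfl
    rw [this, ← hux, ← hs2]
    have hsne : s ≠ 0 := ne_of_gt hs
    field_simp
    ring
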